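/- Let κ be an infinite cardinal with κ^ω = κ, let B ⊆ ω be infinite, let ℰ ⊆ (ℤ^(κ))^ω be maximal with respect to inclusion among the subsets that are linearly independent mod B*, and let g ∈ (ℤ^(κ))^ω. Then there exist an infinite subset A of B, a finite subset E of ℰ, a finite subset D of κ, and rational numbers (r_f : f ∈ E) and (s_ν : ν ∈ D) such that g(n) = Σ_{f ∈ E} r_f · f(n) + Σ_{ν ∈ D} s_ν · χ_ν for every n ∈ A. -/

import Mathlib

open Cardinal Filter Set Pointwise

noncomputable section

/-- A free (nonprincipal) ultrafilter on ω. -/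
def IsFreeUltrafilter (p : Ultrafilter ℕ) : Prop := ∀ n : ℕ, p ≠ pure n

/-- A selective ultrafilter on ω. -/
def IsSelective (p : Ultrafilter ℕ) : Prop :=
  IsFreeUltrafilter p ∧
  ∀ A : ℕ → Set ℕ,
    (∀ k, (A k).Nonempty) → (Pairwise fun k l => Disjoint (A k) (A l)) →
    (⋃ k, A k) = Set.univ →
    (∃ k, A k ∈ p) ∨ ∃ B ∈ p, ∀ k, ∃! n, n ∈ B ∩ A k

/-- Rudin–Keisler order: `U ≤ V` iff `V = f_*(U)` for some `f`. -/
def RKle (U V : Ultrafilter ℕ) : Prop := ∃ f : ℕ → ℕ, Ultrafilter.map f U = V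

/-- Rudin–Keisler incomparability. -/
def RKIncomp (U V : Ultrafilter ℕ) : Prop := ¬ RKle U V ∧ ¬ RKle V U

/-- The index set of order type (the initial ordinal of) `κ`. -/
abbrev Idx (κ : Cardinal) : Type _ := ↥(Set.Iio κ.ord)

/-- The free abelian group `ℤ^(κ)` of finitely supported integer functions on `κ`. -/
abbrev GZ (κ : Cardinal) := Idx κ →₀ ℤ

/-- The ℚ-vector space `ℚ^(κ)` of finitely supported rational functions on `κ`. -/
abbrev GQ (κ : Cardinal) := Idx κ →₀ ℚ

/-- The canonical embedding `ℤ^(κ) → ℚ^(κ)`. -/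
def toQ (κ : Cardinal) (f : GZ κ) : GQ κ :=
  Finsupp.mapRange (Int.cast : ℤ → ℚ) Int.cast_zero f

/-- The characteristic function `χ_ξ`. -/
def chi (κ : Cardinal) (ξ : Idx κ) : GZ κ := Finsupp.single ξ 1

/-- The class `[f]_p` of a sequence `f : ω → ℤ^(κ)` in the ultrapower
`Ult(ℚ, p) = (ℚ^(κ))^ω / p`, realized as a germ. -/
def cls (κ : Cardinal) (p : Ultrafilter ℕ) (f : ℕ → GZ κ) :
    Filter.Germ (↑p : Filter ℕ) (GQ κ) :=
  (↑(fun n => toQ κ (f n)) : Filter.Germ (↑p : Filter ℕ) (GQ κ))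

/-- The class `[χ⃗_ξ]_p` of the constant sequence with value `χ_ξ`. -/
def clsChi (κ : Cardinal) (p : Ultrafilter ℕ) (ξ : Idx κ) :
    Filter.Germ (↑p : Filter ℕ) (GQ κ) :=
  cls κ p (fun _ => chi κ ξ)

/-- `cls` as an additive homomorphism. -/
def clsHom (κ : Cardinal) (p : Ultrafilter ℕ) :
    (ℕ → GZ κ) →+ Filter.Germ (↑p : Filter ℕ) (GQ κ) :=
  AddMonoidHom.mk' (cls κ p) (by
    intro a b
    unfold cls
    have h : (fun n => toQ κ ((a + b) n)) =
        (fun n => toQ κ (a n)) + (fun n => toQ κ (b n)) := by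
      funext n
      simp only [Pi.add_apply, toQ]
      exact Finsupp.mapRange_add (fun x y => by push_cast; ring) _ _
    rw [h, ← Filter.Germ.coe_add])

/-- `Ult(ℤ, p)`: the subgroup of `Ult(ℚ, p)` consisting of classes of
integer-valued sequences. -/
def UltZ (κ : Cardinal) (p : Ultrafilter ℕ) :
    AddSubgroup (Filter.Germ (↑p : Filter ℕ) (GQ κ)) :=
  (clsHom κ p).range

/-- `ℱ` is linearly independent mod `A*`. -/
def LinIndepMod (κ : Cardinal) (A : Set ℕ) (F : Set (ℕ → GZ κ)) : Prop :=
  ∀ p : Ultrafilter ℕ, IsFreeUltrafilter p → A ∈ p →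
    (∀ f ∈ F, ∀ g ∈ F, f ≠ g → cls κ p f ≠ cls κ p g) ∧
    LinearIndependent ℚ
      (Sum.elim (fun f : F => cls κ p ↑f) (fun ξ : Idx κ => clsChi κ p ξ))

/-- `ℰ` is maximal (w.r.t. inclusion) among subsets linearly independent mod `A*`. -/
def MaximalLinIndepMod (κ : Cardinal) (A : Set ℕ) (E : Set (ℕ → GZ κ)) : Prop :=
  LinIndepMod κ A E ∧ ∀ E' : Set (ℕ → GZ κ), LinIndepMod κ A E' → E ⊆ E' → E' = E

/-- A finite tower in ω: a finite decreasing sequence of infinite subsets of ω. -/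
def IsTower (T : List (Set ℕ)) : Prop :=
  (∀ A ∈ T, A.Infinite) ∧
  ∀ i : ℕ, ∀ h : i + 1 < T.length, T.get ⟨i + 1, h⟩ ⊆ T.get ⟨i, Nat.lt_of_succ_lt h⟩

/-- `l(T)`: the last term of a finite tower, with `l(∅) = ω`. -/
def lastOf (T : List (Set ℕ)) : Set ℕ := T.getLastD Set.univ

/-- `x` is a `p`-limit of the sequence `s`. -/
def IsPLim {X : Type*} [TopologicalSpace X] (p : Ultrafilter ℕ) (s : ℕ → X) (x : X) : Prop :=
  ∀ U ∈ nhds x, {n | s n ∈ U} ∈ p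

/-- Countable compactness: every countable open cover has a finite subcover. -/
def CountablyCompactSp (X : Type*) [TopologicalSpace X] : Prop :=
  ∀ 𝒰 : Set (Set X), 𝒰.Countable → (∀ u ∈ 𝒰, IsOpen u) → ⋃₀ 𝒰 = Set.univ →
    ∃ ℱ ⊆ 𝒰, ℱ.Finite ∧ ⋃₀ ℱ = Set.univ


lemma free_mem_infinite (p : Ultrafilter ℕ) (hp : IsFreeUltrafilter p) {S : Set ℕ}
    (hS : S ∈ p) : S.Infinite := by
  by_contra h
  rw [Set.not_infinite] at h
  obtain ⟨x, -, hx⟩ := Ultrafilter.eq_pure_of_finite_mem h hS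
  exact hp x hx

lemma germ_sum (κ : Cardinal) (p : Ultrafilter ℕ) {ι : Type*} (F : Finset ι)
    (c : ι → ℚ) (w : ι → ℕ → GQ κ) :
    (∑ i ∈ F, c i • ((↑(w i) : Filter.Germ (↑p : Filter ℕ) (GQ κ)))) =
      (↑(fun n => ∑ i ∈ F, c i • w i n) : Filter.Germ (↑p : Filter ℕ) (GQ κ)) := by
  classical
  induction F using Finset.cons_induction with
  | empty => simp only [Finset.sum_empty]; rfl
  | cons a F ha ih =>
    rw [Finset.sum_cons, ih, ← Filter.Germ.coe_smul, ← Filter.Germ.coe_add]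
    congr 1
    funext n
    rw [Finset.sum_cons]
    rfl
lemma pullback_aux (κ : Cardinal) (p : Ultrafilter ℕ)
    (E : Set (ℕ → GZ κ)) (g : ℕ → GZ κ)
    (hind : LinearIndependent ℚ
      (Sum.elim (fun f : E => cls κ p ↑f) (fun ξ : Idx κ => clsChi κ p ξ)))
    (s : Finset (↥(E ∪ {g}) ⊕ Idx κ)) (c : ↥(E ∪ {g}) ⊕ Idx κ → ℚ)
    (hsum : ∑ i ∈ s, c i •
      Sum.elim (fun f : ↥(E ∪ {g}) => cls κ p ↑f) (fun ξ : Idx κ => clsChi κ p ξ) i = 0)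
    (hgz : ∀ h : g ∈ E ∪ {g}, c (Sum.inl ⟨g, h⟩) = 0) :
    ∀ i ∈ s, c i = 0 := by
  classical
  set v := Sum.elim (fun f : ↥(E ∪ {g}) => cls κ p (↑f : ℕ → GZ κ))
    (fun ξ : Idx κ => clsChi κ p ξ) with hv
  have hsub : E ⊆ E ∪ {g} := Set.subset_union_left
  set e : ↥E ⊕ Idx κ → ↥(E ∪ {g}) ⊕ Idx κ := Sum.map (Set.inclusion hsub) id with he
  have hinj : Function.Injective e :=
    (Set.inclusion_injective hsub).sumMap Function.injective_id
  have heinl : ∀ (f : ℕ → GZ κ) (hf : f ∈ E) (f' : ↥(E ∪ {g})), (↑f' : ℕ → GZ κ) = f →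
      e (Sum.inl ⟨f, hf⟩) = Sum.inl f' := by
    intro f hf f' hf'
    exact congrArg Sum.inl (Subtype.ext hf'.symm)
  have hvanish : ∀ i ∈ s, i ∉ Set.range e →
      c i • v i = 0 := by
    intro i _ hni
    cases i with
    | inl f' =>
      rcases (Set.mem_union _ _ _).mp f'.2 with hfE | hfg
      · exact absurd ⟨Sum.inl ⟨↑f', hfE⟩, heinl _ hfE f' rfl⟩ hni
      · have hfg' : (↑f' : ℕ → GZ κ) = g := Set.mem_singleton_iff.mp hfg
        have h2 : g ∈ E ∪ {g} := Set.mem_union_right _ rfl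
        have hc : c (Sum.inl f') = 0 := by
          rw [show f' = (⟨g, h2⟩ : ↥(E ∪ {g})) from Subtype.ext hfg']
          exact hgz h2
        rw [hc, zero_smul]
    | inr ξ => exact absurd ⟨Sum.inr ξ, rfl⟩ hni
  have hpre := Finset.sum_preimage e s hinj.injOn (fun i => c i • v i) hvanish
  have hzero : ∀ j ∈ s.preimage e hinj.injOn, (c ∘ e) j = 0 := by
    apply linearIndependent_iff'.mp hind
    have hcomp : ∀ j, v (e j) =
        Sum.elim (fun f : E => cls κ p ↑f) (fun ξ : Idx κ => clsChi κ p ξ) j := by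
      intro j; cases j <;> rfl
    calc ∑ j ∈ s.preimage e hinj.injOn,
          (c ∘ e) j • Sum.elim (fun f : E => cls κ p ↑f) (fun ξ : Idx κ => clsChi κ p ξ) j
        = ∑ j ∈ s.preimage e hinj.injOn, c (e j) • v (e j) := by
          refine Finset.sum_congr rfl fun j _ => by rw [hcomp j]; rfl
      _ = ∑ i ∈ s, c i • v i := hpre
      _ = 0 := hsum
  intro i hi
  cases i with
  | inl f' =>
    rcases (Set.mem_union _ _ _).mp f'.2 with hfE | hfg
    · have hj : Sum.inl (⟨↑f', hfE⟩ : E) ∈ s.preimage e hinj.injOn := by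
        rw [Finset.mem_preimage, heinl _ hfE f' rfl]
        exact hi
      have := hzero _ hj
      rwa [Function.comp_apply, heinl _ hfE f' rfl] at this
    · have hfg' : (↑f' : ℕ → GZ κ) = g := Set.mem_singleton_iff.mp hfg
      have h2 : g ∈ E ∪ {g} := Set.mem_union_right _ rfl
      rw [show f' = (⟨g, h2⟩ : ↥(E ∪ {g})) from Subtype.ext hfg']
      exact hgz h2
  | inr ξ =>
    have hj : Sum.inr ξ ∈ s.preimage e hinj.injOn := by
      rw [Finset.mem_preimage]; exact hi
    exact hzero _ hj

theorem statement7 (κ : Cardinal) (hκ : ℵ₀ ≤ κ) (hpow : κ ^ ℵ₀ = κ)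
    (B : Set ℕ) (hB : B.Infinite)
    (E : Set (ℕ → GZ κ)) (hE : MaximalLinIndepMod κ B E)
    (g : ℕ → GZ κ) :
    ∃ A ⊆ B, A.Infinite ∧
      ∃ E₀ : Finset (ℕ → GZ κ), ↑E₀ ⊆ E ∧
      ∃ D : Finset (Idx κ), ∃ r : (ℕ → GZ κ) → ℚ, ∃ s : Idx κ → ℚ,
        ∀ n ∈ A, toQ κ (g n) =
          (∑ f ∈ E₀, r f • toQ κ (f n)) + ∑ ν ∈ D, s ν • toQ κ (chi κ ν) := by
  classical
  by_cases hg : g ∈ E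
  · refine ⟨B, subset_rfl, hB, {g}, by simpa using hg, ∅, (fun _ => 1), (fun _ => 0), ?_⟩
    intro n _
    simp
  · have hmem : g ∈ E ∪ {g} := Set.mem_union_right _ rfl
    have hnot : ¬ LinIndepMod κ B (E ∪ {g}) := by
      intro h
      exact hg ((hE.2 _ h Set.subset_union_left) ▸ hmem)
    unfold LinIndepMod at hnot
    push_neg at hnot
    obtain ⟨p, hpfree, hBp, hbad⟩ := hnot
    obtain ⟨hdistE, hindE⟩ := hE.1 p hpfree hBp
    by_cases hX : ∀ f ∈ E ∪ {g}, ∀ f' ∈ E ∪ {g}, f ≠ f' → cls κ p f ≠ cls κ p f'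
    · -- linear dependence case
      have hY := hbad hX
      rw [linearIndependent_iff'] at hY
      push_neg at hY
      obtain ⟨s, c, hsum, i₀, hi₀, hci₀⟩ := hY
      set v := Sum.elim (fun f : ↥(E ∪ {g}) => cls κ p (↑f : ℕ → GZ κ))
        (fun ξ : Idx κ => clsChi κ p ξ) with hv
      set gg : ↥(E ∪ {g}) := ⟨g, hmem⟩ with hgg
      by_cases hz : Sum.inl gg ∈ s ∧ c (Sum.inl gg) ≠ 0
      · obtain ⟨hgs, hc0⟩ := hz
        set c₀ := c (Sum.inl gg) with hc₀
        set t := s.erase (Sum.inl gg) with ht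
        have hkey : cls κ p g = ∑ i ∈ t, (-(c i) / c₀) • v i := by
          have h1 : c (Sum.inl gg) • v (Sum.inl gg) + ∑ i ∈ t, c i • v i = 0 :=
            (Finset.add_sum_erase s (fun i => c i • v i) hgs).trans hsum
          have h2 : ∑ i ∈ t, c i • v i = -(c₀ • cls κ p g) :=
            eq_neg_of_add_eq_zero_right h1
          calc cls κ p g
              = (c₀⁻¹ * c₀) • cls κ p g := by rw [inv_mul_cancel₀ hc0, one_smul]
            _ = (-c₀⁻¹) • -(c₀ • cls κ p g) := by
                rw [smul_neg, ← neg_smul, neg_neg, smul_smul]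
            _ = (-c₀⁻¹) • ∑ i ∈ t, c i • v i := by rw [h2]
            _ = ∑ i ∈ t, (-(c i) / c₀) • v i := by
                rw [Finset.smul_sum]
                refine Finset.sum_congr rfl fun i _ => ?_
                rw [smul_smul]
                congr 1
                field_simp
        have hsplit : ∑ i ∈ t, (-(c i) / c₀) • v i =
            (∑ f' ∈ t.toLeft, (-(c (Sum.inl f')) / c₀) • cls κ p (↑f' : ℕ → GZ κ)) +
            ∑ ξ ∈ t.toRight, (-(c (Sum.inr ξ)) / c₀) • clsChi κ p ξ := by
          conv_lhs => rw [← Finset.toLeft_disjSum_toRight (u := t)]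
          rw [Finset.sum_disjSum]
          rfl
        have hgerm : cls κ p g =
            (↑(fun n => (∑ f' ∈ t.toLeft, (-(c (Sum.inl f')) / c₀) • toQ κ ((↑f' : ℕ → GZ κ) n)) +
              ∑ ξ ∈ t.toRight, (-(c (Sum.inr ξ)) / c₀) • toQ κ (chi κ ξ)) :
              Filter.Germ (↑p : Filter ℕ) (GQ κ)) := by
          rw [hkey, hsplit]
          simp only [cls, clsChi]
          rw [germ_sum κ p t.toLeft (fun f' => -(c (Sum.inl f')) / c₀)
            (fun f' n => toQ κ ((↑f' : ℕ → GZ κ) n))]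
          rw [germ_sum κ p t.toRight (fun ξ => -(c (Sum.inr ξ)) / c₀)
            (fun ξ _ => toQ κ (chi κ ξ))]
          rw [← Filter.Germ.coe_add]
          rfl
        have hS : {n | toQ κ (g n) =
            (∑ f' ∈ t.toLeft, (-(c (Sum.inl f')) / c₀) • toQ κ ((↑f' : ℕ → GZ κ) n)) +
              ∑ ξ ∈ t.toRight, (-(c (Sum.inr ξ)) / c₀) • toQ κ (chi κ ξ)} ∈ p :=
          Filter.Germ.coe_eq.mp hgerm
        refine ⟨B ∩ _, Set.inter_subset_left, free_mem_infinite p hpfree (Filter.inter_mem hBp hS),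
          t.toLeft.image Subtype.val, ?_, t.toRight,
          fun f => if h : f ∈ E ∪ ({g} : Set (ℕ → GZ κ)) then -(c (Sum.inl ⟨f, h⟩)) / c₀ else 0,
          fun ξ => -(c (Sum.inr ξ)) / c₀, ?_⟩
        · intro f hf
          simp only [Finset.coe_image, Set.mem_image, Finset.mem_coe, Finset.mem_toLeft] at hf
          obtain ⟨f', hf', rfl⟩ := hf
          rcases (Set.mem_union _ _ _).mp f'.2 with hfE | hfg
          · exact hfE
          · exfalso
            have : f' = gg := Subtype.ext (Set.mem_singleton_iff.mp hfg)
            rw [ht, Finset.mem_erase] at hf'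
            exact hf'.1 (by rw [this])
        · intro n hn
          have hn2 := hn.2
          simp only [Set.mem_setOf_eq] at hn2
          rw [hn2]
          congr 1
          rw [Finset.sum_image (fun x _ y _ h => Subtype.ext h)]
          refine Finset.sum_congr rfl fun f' _ => ?_
          simp only [dif_pos f'.2, Subtype.coe_eta]
      · -- contradiction with independence of E
        exfalso
        set c' : ↥(E ∪ {g}) ⊕ Idx κ → ℚ := fun i => if i = Sum.inl gg then 0 else c i with hc'
        have hceq : ∀ i ∈ s, c' i = c i := by
          intro i hi
          by_cases h : i = Sum.inl gg
          · subst h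
            rw [hc']
            simp only [if_pos rfl]
            push_neg at hz
            exact (hz hi).symm
          · rw [hc']; simp only [if_neg h]
        have hsum' : ∑ i ∈ s, c' i • v i = 0 := by
          rw [Finset.sum_congr rfl (fun i hi => by rw [hceq i hi])]
          exact hsum
        have hall := pullback_aux κ p E g hindE s c' hsum'
          (fun h => by rw [hc']; simp only [if_pos rfl]; exact if_pos rfl)
        have := hall i₀ hi₀
        rw [hceq i₀ hi₀] at this
        exact hci₀ this
    · -- distinctness failure case
      push_neg at hX
      obtain ⟨f, hf, f', hf', hne, hcls⟩ := hX
      have hmain : ∃ f₀ ∈ E, cls κ p g = cls κ p f₀ := by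
        rcases (Set.mem_union _ _ _).mp hf with hfE | hfg
        · rcases (Set.mem_union _ _ _).mp hf' with hf'E | hf'g
          · exact absurd hcls (hdistE f hfE f' hf'E hne)
          · exact ⟨f, hfE, (Set.mem_singleton_iff.mp hf'g ▸ hcls).symm⟩
        · rcases (Set.mem_union _ _ _).mp hf' with hf'E | hf'g
          · exact ⟨f', hf'E, Set.mem_singleton_iff.mp hfg ▸ hcls⟩
          · exact absurd (Set.mem_singleton_iff.mp hfg ▸ Set.mem_singleton_iff.mp hf'g ▸ rfl) hne
      obtain ⟨f₀, hf₀E, hclsg⟩ := hmain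
      have hS : {n | toQ κ (g n) = toQ κ (f₀ n)} ∈ p := Filter.Germ.coe_eq.mp hclsg
      refine ⟨B ∩ _, Set.inter_subset_left, free_mem_infinite p hpfree (Filter.inter_mem hBp hS),
        {f₀}, by simpa using hf₀E, ∅, (fun _ => 1), (fun _ => 0), ?_⟩
      intro n hn
      have := hn.2
      simp only [Set.mem_setOf_eq] at this
      simpa using this

end
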